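/- Let F be a field with char(F) ≠ 2, G a non-abelian group with non-trivial orientation σ and involution *, and suppose FG is normal with respect to the oriented involution ⊛. If N = ker(σ) is an SLC-group with unique non-identity commutator s, then G has a unique non-identity commutator equal to s, and s is central in G. -/

import Mathlib

/-- The oriented involution on the group algebra: `(Σ α_g g)⊛ = Σ α_g σ(g) g*`. -/
noncomputable def oinvMap {F G : Type*} [Field F] [Group G] (st : G → G) (σ : G → F) :
    MonoidAlgebra F G → MonoidAlgebra F G :=
  fun α => Finsupp.sum α.coeff fun g c => MonoidAlgebra.single (st g) (σ g * c)

section aux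
variable {F G : Type*} [Field F] [Group G]

lemma oinv_single (st : G → G) (σ : G → F) (g : G) (c : F) :
    oinvMap st σ (MonoidAlgebra.single g c) = MonoidAlgebra.single (st g) (σ g * c) := by
  unfold oinvMap
  rw [MonoidAlgebra.coeff_single]
  exact Finsupp.sum_single_index (by simp)

lemma oinv_add (st : G → G) (σ : G → F) (p q : MonoidAlgebra F G) :
    oinvMap st σ (p + q) = oinvMap st σ p + oinvMap st σ q := by
  unfold oinvMap
  rw [MonoidAlgebra.coeff_add]
  exact Finsupp.sum_add_index' (fun a => by simp) (fun a b₁ b₂ => by rw [mul_add, MonoidAlgebra.single_add])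

lemma dich (h2 : (2 : F) ≠ 0) {x y z w : G}
    (h : (MonoidAlgebra.single x (-1 : F) + MonoidAlgebra.single y (-1 : F) : MonoidAlgebra F G)
      = MonoidAlgebra.single z (-1 : F) + MonoidAlgebra.single w (-1 : F)) :
    x = z ∨ x = w := by
  classical
  by_contra hcon
  push_neg at hcon
  have hx := congrArg (fun f : MonoidAlgebra F G => f.coeff x) h
  have hx' : (Finsupp.single x (-1 : F)) x + (Finsupp.single y (-1 : F)) x
      = (Finsupp.single z (-1 : F)) x + (Finsupp.single w (-1 : F)) x := hx
  rw [Finsupp.single_apply, Finsupp.single_apply, Finsupp.single_apply,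
    Finsupp.single_apply] at hx'
  rw [if_pos rfl, if_neg (show ¬(z = x) from fun hh => hcon.1 hh.symm),
    if_neg (show ¬(w = x) from fun hh => hcon.2 hh.symm)] at hx'
  by_cases hyx : y = x
  · rw [if_pos hyx] at hx'
    apply h2
    linear_combination -hx'
  · rw [if_neg hyx] at hx'
    simp at hx'

lemma cancel_aux {M : Type*} [AddCommGroup M] {t1 t2 t3 t4 u1 u2 u3 u4 : M}
    (H : t1 + t2 + (t3 + t4) = u1 + u2 + (u3 + u4)) (e1 : t1 = u1) (e4 : t4 = u4) :
    t2 + t3 = u3 + u2 := by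
  have e : (t2 + t3) - (u3 + u2) = (t1 + t2 + (t3 + t4)) - (u1 + u2 + (u3 + u4)) := by
    rw [e1, e4]; abel
  rw [H, sub_self] at e
  exact sub_eq_zero.mp e
end aux

theorem stmt_16 {F G : Type*} [Field F] [Group G] (h2 : (2 : F) ≠ 0)
    (hna : ∃ g h : G, g * h ≠ h * g)
    (st : G → G) (hanti : ∀ g h : G, st (g * h) = st h * st g)
    (hinvol : ∀ g : G, st (st g) = g)
    (σ : G → F) (hhom : ∀ g h : G, σ (g * h) = σ g * σ h)
    (hval : ∀ g : G, σ g = 1 ∨ σ g = -1)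
    (hnt : ∃ g : G, σ g = -1)
    (hker : ∀ g : G, σ (g * st g) = 1)
    (hnormal : ∀ α : MonoidAlgebra F G, α * oinvMap st σ α = oinvMap st σ α * α)
    (s : G) (hsN : σ s = 1) (hs1 : s ≠ 1) (hs2 : s * s = 1)
    (hNna : ∃ m n : G, σ m = 1 ∧ σ n = 1 ∧ m * n ≠ n * m)
    (hNLC : ∀ m n : G, σ m = 1 → σ n = 1 → (m * n = n * m ↔
      ((∀ k : G, σ k = 1 → m * k = k * m) ∨ (∀ k : G, σ k = 1 → n * k = k * n) ∨
        (∀ k : G, σ k = 1 → (m * n) * k = k * (m * n)))))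
    (hNcomm : ∀ m n : G, σ m = 1 → σ n = 1 →
      (m⁻¹ * n⁻¹ * m * n = 1 ∨ m⁻¹ * n⁻¹ * m * n = s))
    (hNcommS : ∃ m n : G, σ m = 1 ∧ σ n = 1 ∧ m⁻¹ * n⁻¹ * m * n = s)
    (hcanon : ∀ n : G, σ n = 1 →
      ((∀ k : G, σ k = 1 → n * k = k * n) → st n = n) ∧
      ((¬ ∀ k : G, σ k = 1 → n * k = k * n) → st n = s * n)) :
    (∀ g h : G, g⁻¹ * h⁻¹ * g * h = 1 ∨ g⁻¹ * h⁻¹ * g * h = s) ∧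
      (∃ g h : G, g⁻¹ * h⁻¹ * g * h = s) ∧ s ∈ Subgroup.center G := by
  classical
  -- s commutes with all of N
  have hsZ : ∀ n : G, σ n = 1 → s * n = n * s := by
    intro n hn
    rcases hNcomm n s hn hsN with h | h
    · have h' : (s * n)⁻¹ * (n * s) = 1 := by
        rw [mul_inv_rev]
        calc n⁻¹ * s⁻¹ * (n * s) = n⁻¹ * s⁻¹ * n * s := by rw [mul_assoc (n⁻¹ * s⁻¹)]
          _ = 1 := h
      exact inv_mul_eq_one.mp h'
    · exfalso
      apply hs1
      have h' : n⁻¹ * s⁻¹ * n = 1 := mul_right_cancel (b := s) (by rw [h, one_mul])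
      have h'' : s⁻¹ = 1 := by
        have := congrArg (fun x => n * x * n⁻¹) h'
        simpa [mul_assoc] using this
      simpa using congrArg (·⁻¹) h''
  -- st s = s
  have hsst : st s = s := (hcanon s hsN).1 (fun k hk => hsZ k hk)
  have hσne : ∀ g : G, σ g ≠ 0 := by
    intro g
    rcases hval g with h | h <;> rw [h]
    · exact one_ne_zero
    · exact neg_ne_zero.mpr one_ne_zero
  -- F2 : g commutes with st g
  have hC : ∀ g : G, g * st g = st g * g := by
    intro g
    have H := hnormal (MonoidAlgebra.single g 1)
    rw [oinv_single, MonoidAlgebra.single_mul_single, MonoidAlgebra.single_mul_single] at H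
    rw [MonoidAlgebra.single_inj] at H
    rcases H with ⟨h, _⟩ | ⟨h, _⟩
    · exact h
    · exfalso; apply hσne g; simpa using h
  -- key dichotomy
  have key : ∀ g n : G, σ g = -1 → σ n = 1 → n ≠ 1 →
      g * (st g * st n) = st g * (n * g) ∨ g * (st g * st n) = (st g * st n) * g := by
    intro g n hg hn hn1
    have hng : σ (n * g) = -1 := by rw [hhom, hn, one_mul, hg]
    have hstng : st (n * g) = st g * st n := hanti n g
    have H := hnormal (MonoidAlgebra.single g (1 : F) + MonoidAlgebra.single (n * g) (1 : F))
    rw [oinv_add, oinv_single, oinv_single, hg, hng, hstng, mul_one] at H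
    rw [mul_add, add_mul, add_mul, mul_add, add_mul, add_mul] at H
    have dAa : (MonoidAlgebra.single g (1 : F)) * (MonoidAlgebra.single (st g) (-1 : F))
        = (MonoidAlgebra.single (st g) (-1 : F)) * (MonoidAlgebra.single g (1 : F)) := by
      rw [MonoidAlgebra.single_mul_single, MonoidAlgebra.single_mul_single, hC g, one_mul, mul_one]
    have dBb : (MonoidAlgebra.single (n * g) (1 : F)) * (MonoidAlgebra.single (st g * st n) (-1 : F))
        = (MonoidAlgebra.single (st g * st n) (-1 : F)) * (MonoidAlgebra.single (n * g) (1 : F)) := by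
      have hcng := hC (n * g)
      rw [hstng] at hcng
      rw [MonoidAlgebra.single_mul_single, MonoidAlgebra.single_mul_single, hcng, one_mul, mul_one]
    have Hc := cancel_aux H dAa dBb
    simp only [MonoidAlgebra.single_mul_single, one_mul, mul_one] at Hc
    rw [add_comm] at Hc
    exact dich h2 Hc
  -- central case: g commutes with anything commuting with all of N
  have keyCentral : ∀ g n : G, σ g = -1 → σ n = 1 →
      (∀ k : G, σ k = 1 → n * k = k * n) → g * n = n * g := by
    intro g n hg hn hcent
    by_cases hn1 : n = 1
    · simp [hn1]
    have hstn : st n = n := (hcanon n hn).1 hcent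
    have h' : g * (st g * n) = st g * (n * g) := by
      rcases key g n hg hn hn1 with h | h <;> rw [hstn] at h
      · exact h
      · rw [h, mul_assoc]
    have h'' : st g * (g * n) = st g * (n * g) := by
      calc st g * (g * n) = st g * g * n := (mul_assoc _ _ _).symm
        _ = g * st g * n := by rw [hC]
        _ = g * (st g * n) := mul_assoc _ _ _
        _ = st g * (n * g) := h'
    exact mul_left_cancel h''
  -- s is central in G
  have hsG : ∀ g : G, g * s = s * g := by
    intro g
    rcases hval g with hg | hg
    · exact (hsZ g hg).symm
    · exact keyCentral g s hg hsN (fun k hk => hsZ k hk)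
  have hsinv : s⁻¹ = s := inv_eq_of_mul_eq_one_right hs2
  -- main mixed-case lemma
  have main : ∀ g n : G, σ g = -1 → σ n = 1 →
      g⁻¹ * n⁻¹ * g * n = 1 ∨ g⁻¹ * n⁻¹ * g * n = s := by
    intro g n hg hn
    by_cases hn1 : n = 1
    · left; simp [hn1]
    have comm_done : g * n = n * g → g⁻¹ * n⁻¹ * g * n = 1 := by
      intro hcomm
      rw [mul_assoc (g⁻¹ * n⁻¹) g n, hcomm]
      group
    by_cases hcent : ∀ k : G, σ k = 1 → n * k = k * n
    · exact Or.inl (comm_done (keyCentral g n hg hn hcent))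
    · have hstn : st n = s * n := (hcanon n hn).2 hcent
      rcases key g n hg hn hn1 with h | h <;> rw [hstn] at h
      · -- g * (st g * (s * n)) = st g * (n * g), commutator is s
        right
        have h1 : st g * (s * (g * n)) = st g * (n * g) := by
          calc st g * (s * (g * n)) = st g * s * (g * n) := by group
            _ = s * st g * (g * n) := by rw [hsG (st g)]
            _ = s * (g * st g) * n := by rw [hC]; group
            _ = (g * st g) * s * n := by rw [hsG (g * st g)]
            _ = g * (st g * (s * n)) := by group
            _ = st g * (n * g) := h
        have h2 : s * (g * n) = n * g := mul_left_cancel h1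
        have h3 : g * n = s * (n * g) := by
          rw [← h2, ← mul_assoc, hs2, one_mul]
        calc g⁻¹ * n⁻¹ * g * n = g⁻¹ * n⁻¹ * (g * n) := by group
          _ = g⁻¹ * n⁻¹ * (s * (n * g)) := by rw [h3]
          _ = g⁻¹ * (n⁻¹ * s) * (n * g) := by group
          _ = g⁻¹ * (s * n⁻¹) * (n * g) := by rw [hsG n⁻¹]
          _ = (g⁻¹ * s) * g := by group
          _ = (s * g⁻¹) * g := by rw [hsG g⁻¹]
          _ = s := by group
      · -- commuting case
        left
        apply comm_done
        have h1 : st g * (s * (g * n)) = st g * (s * (n * g)) := by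
          calc st g * (s * (g * n)) = st g * s * (g * n) := by group
            _ = s * st g * (g * n) := by rw [hsG (st g)]
            _ = s * (g * st g) * n := by rw [hC]; group
            _ = (g * st g) * s * n := by rw [hsG (g * st g)]
            _ = g * (st g * (s * n)) := by group
            _ = st g * (s * n) * g := h
            _ = st g * (s * (n * g)) := by group
        exact mul_left_cancel (mul_left_cancel h1)
  -- assemble
  have hcommAll : ∀ g h : G, g⁻¹ * h⁻¹ * g * h = 1 ∨ g⁻¹ * h⁻¹ * g * h = s := by
    intro g h
    rcases hval g with hg | hg <;> rcases hval h with hh | hh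
    · exact hNcomm g h hg hh
    · have flip : g⁻¹ * h⁻¹ * g * h = (h⁻¹ * g⁻¹ * h * g)⁻¹ := by group
      rcases main h g hh hg with hc | hc
      · left; rw [flip, hc, inv_one]
      · right; rw [flip, hc, hsinv]
    · exact main g h hg hh
    · have hn : σ (g⁻¹ * h) = 1 := by
        have e := hhom g (g⁻¹ * h)
        rw [show g * (g⁻¹ * h) = h by group, hh, hg] at e
        linear_combination e
      have red : g⁻¹ * h⁻¹ * g * h = g⁻¹ * (g⁻¹ * h)⁻¹ * g * (g⁻¹ * h) := by group
      rcases main g (g⁻¹ * h) hg hn with hc | hc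
      · left; rw [red, hc]
      · right; rw [red, hc]
  refine ⟨hcommAll, ?_, ?_⟩
  · obtain ⟨m, n, _, _, h⟩ := hNcommS
    exact ⟨m, n, h⟩
  · rw [Subgroup.mem_center_iff]
    intro g
    exact hsG g
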